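/- arXiv:0909.4464 — 2 statements merged into one kernel-verified Lean document; each statement's English description precedes it below -/
import Mathlib

section
/- Let σ ∈ {-1, 0, 1}. Define the action of g = [[a,b],[c,d]] ∈ SL(2,ℝ) on pairs (u,v) with v > 0 by g·(u,v) = (((au+b)(cu+d) - σ c a v²)/((cu+d)² - σ(cv)²), v/((cu+d)² - σ(cv)²)). Then this is a group action: (g₁g₂)·(u,v) = g₁·(g₂·(u,v)) whenever the denominators are nonzero. -/
set_option maxHeartbeats 1000000


open Matrix

/-- The `σ`-parametrised action of a 2×2 matrix on the upper half-plane. -/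
noncomputable def sl2Act (σ : ℝ) (g : Matrix (Fin 2) (Fin 2) ℝ) (p : ℝ × ℝ) : ℝ × ℝ :=
  (((g 0 0 * p.1 + g 0 1) * (g 1 0 * p.1 + g 1 1) - σ * g 1 0 * g 0 0 * p.2 ^ 2) /
      ((g 1 0 * p.1 + g 1 1) ^ 2 - σ * (g 1 0 * p.2) ^ 2),
    p.2 / ((g 1 0 * p.1 + g 1 1) ^ 2 - σ * (g 1 0 * p.2) ^ 2))

/-- The denominator of the `σ`-action. -/
def sl2Denom (σ : ℝ) (g : Matrix (Fin 2) (Fin 2) ℝ) (p : ℝ × ℝ) : ℝ :=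
  (g 1 0 * p.1 + g 1 1) ^ 2 - σ * (g 1 0 * p.2) ^ 2

/-- The `σ`-parametrised formula defines a group action of `SL(2,ℝ)`
wherever the denominators do not vanish. -/
theorem sl2Act_mul (σ : ℝ) (hσ : σ ∈ ({-1, 0, 1} : Set ℝ))
    (g₁ g₂ : Matrix.SpecialLinearGroup (Fin 2) ℝ) (u v : ℝ) (hv : 0 < v)
    (h₂ : sl2Denom σ (g₂ : Matrix (Fin 2) (Fin 2) ℝ) (u, v) ≠ 0)
    (h₁ : sl2Denom σ (g₁ : Matrix (Fin 2) (Fin 2) ℝ)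
      (sl2Act σ (g₂ : Matrix (Fin 2) (Fin 2) ℝ) (u, v)) ≠ 0)
    (h₁₂ : sl2Denom σ ((g₁ * g₂ : Matrix.SpecialLinearGroup (Fin 2) ℝ) :
      Matrix (Fin 2) (Fin 2) ℝ) (u, v) ≠ 0) :
    sl2Act σ ((g₁ * g₂ : Matrix.SpecialLinearGroup (Fin 2) ℝ) :
        Matrix (Fin 2) (Fin 2) ℝ) (u, v) =
      sl2Act σ (g₁ : Matrix (Fin 2) (Fin 2) ℝ)
        (sl2Act σ (g₂ : Matrix (Fin 2) (Fin 2) ℝ) (u, v)) := by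
  have det₂ := g₂.prop
  rw [Matrix.det_fin_two] at det₂
  simp only [sl2Act, sl2Denom, Matrix.SpecialLinearGroup.coe_mul, Matrix.mul_apply,
    Fin.sum_univ_two] at *
  set a := (g₁ : Matrix (Fin 2) (Fin 2) ℝ) 0 0 with ha
  set b := (g₁ : Matrix (Fin 2) (Fin 2) ℝ) 0 1 with hb
  set c := (g₁ : Matrix (Fin 2) (Fin 2) ℝ) 1 0 with hc
  set d := (g₁ : Matrix (Fin 2) (Fin 2) ℝ) 1 1 with hd
  set e := (g₂ : Matrix (Fin 2) (Fin 2) ℝ) 0 0 with he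
  set f := (g₂ : Matrix (Fin 2) (Fin 2) ℝ) 0 1 with hf
  set g := (g₂ : Matrix (Fin 2) (Fin 2) ℝ) 1 0 with hg
  set k := (g₂ : Matrix (Fin 2) (Fin 2) ℝ) 1 1 with hk
  set N : ℝ := (e * u + f) * (g * u + k) - σ * g * e * v ^ 2 with hN
  set D : ℝ := (g * u + k) ^ 2 - σ * (g * v) ^ 2 with hD
  have keyD : (c * N + d * D) ^ 2 - σ * (c * v) ^ 2 =
      (((c * e + d * g) * u + (c * f + d * k)) ^ 2 - σ * ((c * e + d * g) * v) ^ 2) * D := by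
    rw [hN, hD]
    linear_combination (σ * v ^ 2 * c ^ 2 * (e * k - f * g + 1)) * det₂
  have keyN : (a * N + b * D) * (c * N + d * D) - σ * c * a * v ^ 2 =
      (((a * e + b * g) * u + (a * f + b * k)) * ((c * e + d * g) * u + (c * f + d * k)) -
        σ * (c * e + d * g) * (a * e + b * g) * v ^ 2) * D := by
    rw [hN, hD]
    linear_combination (σ * a * c * v ^ 2 * (e * k - f * g + 1)) * det₂
  have hX : (c * N + d * D) ^ 2 - σ * (c * v) ^ 2 ≠ 0 := by
    rw [keyD]; exact mul_ne_zero h₁₂ h₂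
  clear_value a b c d e f g k N D
  rw [Prod.ext_iff]
  constructor
  · have hh : (c * (N / D) + d) ^ 2 - σ * (c * (v / D)) ^ 2 =
        (((c * e + d * g) * u + (c * f + d * k)) ^ 2 - σ * ((c * e + d * g) * v) ^ 2) / D := by
      rw [eq_div_iff h₂]; field_simp; linear_combination keyD
    have hn : (a * (N / D) + b) * (c * (N / D) + d) - σ * c * a * (v / D) ^ 2 =
        (((a * e + b * g) * u + (a * f + b * k)) * ((c * e + d * g) * u + (c * f + d * k)) -
          σ * (c * e + d * g) * (a * e + b * g) * v ^ 2) / D := by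
      rw [eq_div_iff h₂]; field_simp; linear_combination keyN
    simp only [hh, hn]
    rw [div_div_div_cancel_right₀ h₂]
  · have hh : (c * (N / D) + d) ^ 2 - σ * (c * (v / D)) ^ 2 =
        (((c * e + d * g) * u + (c * f + d * k)) ^ 2 - σ * ((c * e + d * g) * v) ^ 2) / D := by
      rw [eq_div_iff h₂]; field_simp; linear_combination keyD
    simp only [hh]
    rw [div_div_div_cancel_right₀ h₂]
end

section
/- In the algebra ℝ[ι] where ι² = σ with σ ∈ {-1,0,1}, the map (u,v) ↦ u + ιv intertwines the σ-parametrised SL(2,ℝ) action ((au+b)(cu+d) - σcav², v)/((cu+d)² - σ(cv)²) with the Möbius transformation w ↦ (aw+b)/(cw+d), i.e. if w = u + ιv then (aw+b)(cw+d)⁻¹ = u' + ιv' where (u',v') is the image of (u,v), provided (cw+d) is invertible. -/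
open Matrix

/-- Multiplication in the algebra `ℝ[ι]` with `ι² = σ`, written in coordinates:
`(u + ιv)(u' + ιv') = (uu' + σ v v') + ι (u v' + v u')`. -/
def hcMul (σ : ℝ) (p q : ℝ × ℝ) : ℝ × ℝ :=
  (p.1 * q.1 + σ * p.2 * q.2, p.1 * q.2 + p.2 * q.1)

/-- The map `(u,v) ↦ u + ιv` intertwines the `σ`-parametrised `SL(2,ℝ)` action with the
Möbius transformation `w ↦ (aw + b)(cw + d)⁻¹` in `ℝ[ι]`, `ι² = σ`: writing the inverse
of `cw + d = (cu + d) + ι(cv)` as `((cu+d) - ι(cv))/((cu+d)² - σ(cv)²)`, the element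
`(aw + b)(cw + d)⁻¹` has coordinates given by the action formula. -/
theorem moebius_eq_sl2Act (σ : ℝ) (hσ : σ ∈ ({-1, 0, 1} : Set ℝ))
    (g : Matrix.SpecialLinearGroup (Fin 2) ℝ) (u v : ℝ)
    (a b c d : ℝ) (ha : a = g.1 0 0) (hb : b = g.1 0 1) (hc : c = g.1 1 0)
    (hd : d = g.1 1 1)
    (hden : (c * u + d) ^ 2 - σ * (c * v) ^ 2 ≠ 0) :
    -- `(cw+d)⁻¹` really is the inverse of `cw + d`:
    hcMul σ (c * u + d, c * v)
        ((c * u + d) / ((c * u + d) ^ 2 - σ * (c * v) ^ 2),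
         -(c * v) / ((c * u + d) ^ 2 - σ * (c * v) ^ 2)) = (1, 0) ∧
    -- and `(aw+b)(cw+d)⁻¹ = u' + ι v'` with `(u',v')` given by the action formula:
    hcMul σ (a * u + b, a * v)
        ((c * u + d) / ((c * u + d) ^ 2 - σ * (c * v) ^ 2),
         -(c * v) / ((c * u + d) ^ 2 - σ * (c * v) ^ 2)) =
      (((a * u + b) * (c * u + d) - σ * c * a * v ^ 2) /
          ((c * u + d) ^ 2 - σ * (c * v) ^ 2),
        v / ((c * u + d) ^ 2 - σ * (c * v) ^ 2)) := by
  have hdet : a * d - b * c = 1 := by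
    rw [ha, hb, hc, hd]
    have := g.2
    rw [Matrix.det_fin_two] at this
    linarith
  simp only [hcMul, Prod.mk.injEq]
  refine ⟨⟨?_, ?_⟩, ?_, ?_⟩ <;> field_simp
  · rw [div_eq_one_iff_eq (fun h => hden (by linear_combination h))]; ring
  · ring
  · ring
  · congr 1; linear_combination v * hdet
end
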